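/- For every n ≥ 3, the Lagrangian of the 3-graph B(2, n−2) satisfies λ(B(2, n−2)) ≤ √3/18, and moreover λ(B(2, n−2)) → √3/18 as n → ∞. -/

import Mathlib

open Finset

/-- An `r`-uniform hypergraph (r-graph) with vertices drawn from `ℕ`. -/
structure HyperGraph (r : ℕ) where
  verts : Finset ℕ
  edges : Finset (Finset ℕ)
  edges_sub : ∀ e ∈ edges, e ⊆ verts
  card_eq : ∀ e ∈ edges, e.card = r

/-- A 3-uniform hypergraph (3-graph). -/
abbrev ThreeGraph := HyperGraph 3

/-- A feasible weight vector on `G`: nonnegative weights on the vertices summing to 1. -/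
def HyperGraph.IsFeasible {r : ℕ} (G : HyperGraph r) (w : ℕ → ℝ) : Prop :=
  (∀ v ∈ G.verts, 0 ≤ w v) ∧ ∑ v ∈ G.verts, w v = 1

/-- The Lagrangian function `λ(G, w) = Σ_{e ∈ E(G)} Π_{v ∈ e} w v`. -/
noncomputable def HyperGraph.lagFun {r : ℕ} (G : HyperGraph r) (w : ℕ → ℝ) : ℝ :=
  ∑ e ∈ G.edges, ∏ v ∈ e, w v

/-- The Lagrangian `λ(G)`: the maximum of `λ(G, w)` over feasible weight vectors. -/
noncomputable def HyperGraph.lag {r : ℕ} (G : HyperGraph r) : ℝ :=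
  sSup {x : ℝ | ∃ w, G.IsFeasible w ∧ G.lagFun w = x}

/-- `G` contains a copy of `F`: an injection of the vertices of `F` into those of `G`
mapping every edge of `F` to an edge of `G`. -/
def HyperGraph.ContainsCopy {r : ℕ} (G F : HyperGraph r) : Prop :=
  ∃ f : ℕ → ℕ, Set.InjOn f ↑F.verts ∧ (∀ v ∈ F.verts, f v ∈ G.verts) ∧
    ∀ e ∈ F.edges, e.image f ∈ G.edges

/-- `G` is `F`-free. -/
def HyperGraph.Free {r : ℕ} (G F : HyperGraph r) : Prop := ¬ G.ContainsCopy F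

/-- `H` is a subgraph of `G`. -/
def HyperGraph.IsSubgraph {r : ℕ} (H G : HyperGraph r) : Prop :=
  H.verts ⊆ G.verts ∧ H.edges ⊆ G.edges

/-- `G` is dense: every proper subgraph has strictly smaller Lagrangian. -/
def HyperGraph.LagDense {r : ℕ} (G : HyperGraph r) : Prop :=
  ∀ H : HyperGraph r, H.IsSubgraph G → (H.verts ≠ G.verts ∨ H.edges ≠ G.edges) →
    H.lag < G.lag

/-- The Lagrangian density `π_λ(F) = sup { r! · λ(G) : G is F-free }`. -/
noncomputable def lagDensity {r : ℕ} (F : HyperGraph r) : ℝ :=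
  sSup {x : ℝ | ∃ G : HyperGraph r, G.Free F ∧ x = (Nat.factorial r : ℝ) * G.lag}

/-- An optimum weight vector for `G`. -/
def HyperGraph.IsOptimal {r : ℕ} (G : HyperGraph r) (w : ℕ → ℝ) : Prop :=
  G.IsFeasible w ∧ G.lagFun w = G.lag

/-- `K_4^3 ∪ e`: the disjoint union of the complete 3-graph on `{1,2,3,4}`
and the single edge `{5,6,7}`. -/
def K43e : ThreeGraph where
  verts := {1, 2, 3, 4, 5, 6, 7}
  edges := {{1, 2, 3}, {1, 2, 4}, {1, 3, 4}, {2, 3, 4}, {5, 6, 7}}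
  edges_sub := by decide
  card_eq := by decide

/-- `B(2, n-2)`: the 3-graph on `{1, …, n}` whose edges are the 3-element subsets
meeting `{1, 2}`. -/
def B2 (n : ℕ) : ThreeGraph where
  verts := Finset.Icc 1 n
  edges := ((Finset.Icc 1 n).powersetCard 3).filter
    (fun e => (e ∩ ({1, 2} : Finset ℕ)).Nonempty)
  edges_sub := by
    intro e he
    rw [Finset.mem_filter, Finset.mem_powersetCard] at he
    exact he.1.1
  card_eq := by
    intro e he
    rw [Finset.mem_filter, Finset.mem_powersetCard] at he
    exact he.1.2


section Aux

lemma sum_pc_one (S : Finset ℕ) (w : ℕ → ℝ) :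
    ∑ p ∈ S.powersetCard 1, ∏ v ∈ p, w v = ∑ v ∈ S, w v := by
  rw [Finset.powersetCard_one, Finset.sum_map]
  simp

lemma pair_sum_le (S : Finset ℕ) (w : ℕ → ℝ) (hw : ∀ v ∈ S, 0 ≤ w v) :
    ∑ p ∈ S.powersetCard 2, ∏ v ∈ p, w v ≤ (∑ v ∈ S, w v) ^ 2 / 2 := by
  induction S using Finset.induction with
  | empty =>
    rw [show (Finset.powersetCard 2 (∅:Finset ℕ)) = ∅ by simp]
    simp
  | @insert a S ha ih =>
    rw [Finset.powersetCard_succ_insert ha, Finset.sum_union, Finset.sum_image,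
      Finset.sum_insert ha]
    · have h1 : ∑ p ∈ S.powersetCard 1, w a * ∏ v ∈ p, w v
          = w a * ∑ v ∈ S, w v := by
        rw [← Finset.mul_sum, sum_pc_one]
      have h2 : ∀ p ∈ S.powersetCard 1, ∏ v ∈ insert a p, w v = w a * ∏ v ∈ p, w v := by
        intro p hp
        rw [Finset.mem_powersetCard] at hp
        rw [Finset.prod_insert (fun h => ha (hp.1 h))]
      rw [Finset.sum_congr rfl h2, h1]
      have hwa : 0 ≤ w a := hw a (Finset.mem_insert_self a S)
      have hT : 0 ≤ ∑ v ∈ S, w v :=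
        Finset.sum_nonneg fun v hv => hw v (Finset.mem_insert_of_mem hv)
      have := ih (fun v hv => hw v (Finset.mem_insert_of_mem hv))
      nlinarith [sq_nonneg (w a)]
    · intro p hp q hq h
      rw [Finset.mem_coe, Finset.mem_powersetCard] at hp hq
      have hap : a ∉ p := fun h' => ha (hp.1 h')
      have haq : a ∉ q := fun h' => ha (hq.1 h')
      rw [← Finset.erase_insert hap, h, Finset.erase_insert haq]
    · rw [Finset.disjoint_left]
      intro p hp hq
      rw [Finset.mem_powersetCard] at hp
      simp only [Finset.mem_image] at hq
      obtain ⟨q, hq, rfl⟩ := hq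
      exact ha (hp.1 (Finset.mem_insert_self a q))

lemma B2_edges (n : ℕ) (hn : 3 ≤ n) :
    (B2 n).edges = ((Icc 3 n).image fun v => ({1, 2, v} : Finset ℕ)) ∪
      ((Icc 3 n).powersetCard 2).image (insert 1) ∪
      ((Icc 3 n).powersetCard 2).image (insert 2) := by
  ext e
  simp only [B2, Finset.mem_filter, Finset.mem_powersetCard, Finset.mem_union,
    Finset.mem_image]
  constructor
  · rintro ⟨⟨hsub, hcard⟩, hne⟩
    obtain ⟨x, hx⟩ := hne
    rw [Finset.mem_inter] at hx
    have hx2 : x = 1 ∨ x = 2 := by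
      have := hx.2; simp at this; omega
    have hmem : ∀ y ∈ e, 1 ≤ y ∧ y ≤ n := by
      intro y hy; have := hsub hy; rw [Finset.mem_Icc] at this; exact this
    by_cases h1 : 1 ∈ e
    · by_cases h2 : 2 ∈ e
      · left; left
        have h2' : 2 ∈ e.erase 1 := Finset.mem_erase.2 ⟨by norm_num, h2⟩
        have hc : ((e.erase 1).erase 2).card = 1 := by
          rw [Finset.card_erase_of_mem h2', Finset.card_erase_of_mem h1, hcard]
        obtain ⟨v, hv⟩ := Finset.card_eq_one.1 hc
        have hve : v ∈ (e.erase 1).erase 2 := hv ▸ Finset.mem_singleton_self v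
        have hv2 : v ≠ 2 := (Finset.mem_erase.1 hve).1
        have hv1 : v ≠ 1 := (Finset.mem_erase.1 (Finset.mem_erase.1 hve).2).1
        have hvin : v ∈ e := Finset.mem_of_mem_erase (Finset.mem_of_mem_erase hve)
        refine ⟨v, ?_, ?_⟩
        · rw [Finset.mem_Icc]; have := hmem v hvin; omega
        · have : e = insert 1 (insert 2 {v}) := by
            rw [← hv, Finset.insert_erase h2', Finset.insert_erase h1]
          rw [this]
      · left; right
        refine ⟨e.erase 1, ⟨?_, ?_⟩, Finset.insert_erase h1⟩
        · intro y hy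
          have hy1 : y ≠ 1 := (Finset.mem_erase.1 hy).1
          have hye : y ∈ e := Finset.mem_of_mem_erase hy
          have hy2 : y ≠ 2 := fun h => h2 (h ▸ hye)
          rw [Finset.mem_Icc]; have := hmem y hye; omega
        · rw [Finset.card_erase_of_mem h1, hcard]
    · have h2 : 2 ∈ e := by rcases hx2 with h | h <;> [exact absurd (h ▸ hx.1) h1; exact h ▸ hx.1]
      right
      refine ⟨e.erase 2, ⟨?_, ?_⟩, Finset.insert_erase h2⟩
      · intro y hy
        have hy2 : y ≠ 2 := (Finset.mem_erase.1 hy).1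
        have hye : y ∈ e := Finset.mem_of_mem_erase hy
        have hy1 : y ≠ 1 := fun h => h1 (h ▸ hye)
        rw [Finset.mem_Icc]; have := hmem y hye; omega
      · rw [Finset.card_erase_of_mem h2, hcard]
  · rintro (((⟨v, hv, rfl⟩) | ⟨p, hp, rfl⟩) | ⟨p, hp, rfl⟩)
    · rw [Finset.mem_Icc] at hv
      have hv1 : v ≠ 1 := by omega
      have hv2 : v ≠ 2 := by omega
      refine ⟨⟨?_, ?_⟩, ⟨1, ?_⟩⟩
      · intro y hy
        simp only [Finset.mem_insert, Finset.mem_singleton] at hy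
        rw [Finset.mem_Icc]; rcases hy with rfl | rfl | rfl <;> omega
      · rw [Finset.card_insert_of_notMem (by simp [hv2.symm]; omega),
          Finset.card_insert_of_notMem (by simp [hv2.symm]), Finset.card_singleton]
      · simp
    · have h1p : 1 ∉ p := fun h => by have := hp.1 h; rw [Finset.mem_Icc] at this; omega
      refine ⟨⟨?_, ?_⟩, ⟨1, ?_⟩⟩
      · intro y hy
        rw [Finset.mem_insert] at hy
        rcases hy with rfl | hy
        · rw [Finset.mem_Icc]; omega
        · have := hp.1 hy; rw [Finset.mem_Icc] at this ⊢; omega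
      · rw [Finset.card_insert_of_notMem h1p, hp.2]
      · simp
    · have h2p : 2 ∉ p := fun h => by have := hp.1 h; rw [Finset.mem_Icc] at this; omega
      refine ⟨⟨?_, ?_⟩, ⟨2, ?_⟩⟩
      · intro y hy
        rw [Finset.mem_insert] at hy
        rcases hy with rfl | hy
        · rw [Finset.mem_Icc]; omega
        · have := hp.1 hy; rw [Finset.mem_Icc] at this ⊢; omega
      · rw [Finset.card_insert_of_notMem h2p, hp.2]
      · simp

lemma B2_lagFun (n : ℕ) (hn : 3 ≤ n) (w : ℕ → ℝ) :
    (B2 n).lagFun w = w 1 * w 2 * (∑ v ∈ Icc 3 n, w v)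
      + (w 1 + w 2) * ∑ p ∈ (Icc 3 n).powersetCard 2, ∏ v ∈ p, w v := by
  have hmem3 : ∀ v ∈ Icc 3 n, 3 ≤ v ∧ v ≤ n := by
    intro v hv; rw [Finset.mem_Icc] at hv; exact hv
  have hpmem : ∀ p ∈ (Icc 3 n).powersetCard 2, (1 ∉ p ∧ 2 ∉ p) := by
    intro p hp
    rw [Finset.mem_powersetCard] at hp
    constructor <;> (intro h; have := hmem3 _ (hp.1 h); omega)
  have hD1 : Disjoint ((Icc 3 n).image fun v => ({1, 2, v} : Finset ℕ))
      (((Icc 3 n).powersetCard 2).image (insert 1)) := by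
    rw [Finset.disjoint_left]
    rintro e he1 he2
    simp only [Finset.mem_image] at he1 he2
    obtain ⟨v, _, rfl⟩ := he1
    obtain ⟨p, hp, hpe⟩ := he2
    have h2 : (2:ℕ) ∈ insert 1 p := by rw [hpe]; simp
    rw [Finset.mem_insert] at h2
    rcases h2 with h | h
    · omega
    · exact (hpmem p hp).2 h
  have hD2 : Disjoint (((Icc 3 n).image fun v => ({1, 2, v} : Finset ℕ)) ∪
      ((Icc 3 n).powersetCard 2).image (insert 1))
      (((Icc 3 n).powersetCard 2).image (insert 2)) := by
    rw [Finset.disjoint_left]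
    rintro e he1 he2
    simp only [Finset.mem_image] at he2
    obtain ⟨p, hp, hpe⟩ := he2
    have h1 : (1:ℕ) ∈ e := by
      rw [Finset.mem_union] at he1
      rcases he1 with h | h
      · simp only [Finset.mem_image] at h
        obtain ⟨x, _, rfl⟩ := h
        simp
      · simp only [Finset.mem_image] at h
        obtain ⟨q, _, rfl⟩ := h
        simp
    rw [← hpe, Finset.mem_insert] at h1
    rcases h1 with h | h
    · omega
    · exact (hpmem p hp).1 h
  rw [HyperGraph.lagFun, B2_edges n hn, Finset.sum_union hD2, Finset.sum_union hD1]
  have hS1 : ∑ e ∈ (Icc 3 n).image (fun v => ({1, 2, v} : Finset ℕ)), ∏ v ∈ e, w v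
      = w 1 * w 2 * ∑ v ∈ Icc 3 n, w v := by
    rw [Finset.sum_image ?inj]
    case inj =>
      intro x hx y hy h
      have hx3 := hmem3 x hx
      have : x ∈ ({1, 2, y} : Finset ℕ) := by rw [show ({1, 2, y} : Finset ℕ) = {1, 2, x} from h.symm]; simp
      simp only [Finset.mem_insert, Finset.mem_singleton] at this
      omega
    rw [Finset.mul_sum]
    refine Finset.sum_congr rfl fun v hv => ?_
    have hv3 := hmem3 v hv
    rw [show ({1, 2, v} : Finset ℕ) = insert 1 (insert 2 {v}) from rfl,
      Finset.prod_insert (by simp; omega), Finset.prod_insert (by simp; omega),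
      Finset.prod_singleton, mul_assoc]
  have key : ∀ a : ℕ, a ∉ Icc 3 n →
      ∑ e ∈ ((Icc 3 n).powersetCard 2).image (insert a), ∏ v ∈ e, w v
      = w a * ∑ p ∈ (Icc 3 n).powersetCard 2, ∏ v ∈ p, w v := by
    intro a ha
    have hap : ∀ p ∈ (Icc 3 n).powersetCard 2, a ∉ p := by
      intro p hp h
      rw [Finset.mem_powersetCard] at hp
      exact ha (hp.1 h)
    rw [Finset.sum_image ?inj2]
    case inj2 =>
      intro x hx y hy h
      rw [← Finset.erase_insert (hap x hx), h, Finset.erase_insert (hap y hy)]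
    rw [Finset.mul_sum]
    exact Finset.sum_congr rfl fun p hp => Finset.prod_insert (hap p hp)
  rw [hS1, key 1 (by simp), key 2 (by simp)]
  ring

lemma Icc_split (n : ℕ) (hn : 3 ≤ n) :
    Icc 1 n = insert 1 (insert 2 (Icc 3 n)) := by
  ext x
  simp only [Finset.mem_Icc, Finset.mem_insert]
  omega

lemma B2_lagFun_le (n : ℕ) (hn : 3 ≤ n) (w : ℕ → ℝ) (hw : (B2 n).IsFeasible w) :
    (B2 n).lagFun w ≤ Real.sqrt 3 / 18 := by
  obtain ⟨hw0, hw1⟩ := hw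
  have h1mem : (1:ℕ) ∈ (B2 n).verts := by
    simp only [B2, Finset.mem_Icc]; omega
  have h2mem : (2:ℕ) ∈ (B2 n).verts := by
    simp only [B2, Finset.mem_Icc]; omega
  have ha : 0 ≤ w 1 := hw0 1 h1mem
  have hb : 0 ≤ w 2 := hw0 2 h2mem
  have hw3 : ∀ v ∈ Icc 3 n, 0 ≤ w v := by
    intro v hv
    rw [Finset.mem_Icc] at hv
    exact hw0 v (by simp only [B2, Finset.mem_Icc]; omega)
  have hT : 0 ≤ ∑ v ∈ Icc 3 n, w v := Finset.sum_nonneg hw3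
  have hsum : w 1 + w 2 + ∑ v ∈ Icc 3 n, w v = 1 := by
    have := hw1
    simp only [B2] at this
    rw [Icc_split n hn, Finset.sum_insert (by simp only [Finset.mem_insert, Finset.mem_Icc]; omega), Finset.sum_insert (by simp only [Finset.mem_Icc]; omega)] at this
    linarith
  have hP := pair_sum_le (Icc 3 n) w hw3
  rw [B2_lagFun n hn w]
  set a := w 1
  set b := w 2
  set T := ∑ v ∈ Icc 3 n, w v
  set P := ∑ p ∈ (Icc 3 n).powersetCard 2, ∏ v ∈ p, w v
  set r := Real.sqrt 3 with hr
  have hr2 : r ^ 2 = 3 := Real.sq_sqrt (by norm_num)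
  have hr0 : 0 ≤ r := Real.sqrt_nonneg 3
  have hr3 : r ^ 3 = 3 * r := by
    rw [pow_succ, hr2]
  have hstep1 : (a + b) * P ≤ (a + b) * (T ^ 2 / 2) :=
    mul_le_mul_of_nonneg_left hP (by linarith)
  have hstep2 : a * b * T ≤ ((a + b) ^ 2 / 4) * T := by
    nlinarith [sq_nonneg (a - b)]
  have hstep3 : ((a + b) ^ 2 / 4) * T + (a + b) * (T ^ 2 / 2) ≤ r / 18 := by
    have hab : a + b = 1 - T := by linarith
    rw [hab]
    nlinarith [mul_nonneg (sq_nonneg (3 * T - r)) (show (0:ℝ) ≤ 3 * T + 2 * r by linarith)]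
  linarith

/-- The asymptotically optimal weights for `B2 n`. -/
noncomputable def wOpt (n : ℕ) : ℕ → ℝ := fun v =>
  if v ≤ 2 then (1 - Real.sqrt 3 / 3) / 2
  else if v ≤ n then (Real.sqrt 3 / 3) / ((n : ℝ) - 2) else 0

lemma wOpt_spec (n : ℕ) (hn : 3 ≤ n) :
    (B2 n).IsFeasible (wOpt n) ∧
    (B2 n).lagFun (wOpt n) =
      Real.sqrt 3 / 18 -
        ((1 - Real.sqrt 3 / 3) * (Real.sqrt 3 / 3) ^ 2 / 2) * (1 / ((n : ℝ) - 2)) := by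
  set r := Real.sqrt 3 with hrdef
  have hr2 : r ^ 2 = 3 := Real.sq_sqrt (by norm_num)
  have hr0 : 0 ≤ r := Real.sqrt_nonneg 3
  have hrle : r ≤ 2 := by nlinarith [sq_nonneg (r - 2)]
  set s : ℝ := r / 3 with hsdef
  set t : ℝ := 1 - r / 3 with htdef
  have hs0 : 0 ≤ s := by positivity
  have ht0 : 0 ≤ t := by rw [htdef]; linarith
  have hu : (1:ℝ) ≤ (n : ℝ) - 2 := by
    have : (3:ℝ) ≤ (n : ℝ) := by exact_mod_cast hn
    linarith
  have hu0 : (n : ℝ) - 2 ≠ 0 := by linarith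
  have hval12 : ∀ v : ℕ, v ≤ 2 → wOpt n v = t / 2 := by
    intro v hv; simp [wOpt, hv]; rw [htdef, hrdef]
  have hval3 : ∀ v ∈ Icc 3 n, wOpt n v = s / ((n : ℝ) - 2) := by
    intro v hv
    rw [Finset.mem_Icc] at hv
    simp only [wOpt]
    rw [if_neg (by omega), if_pos hv.2]
  have hcard3 : (Icc 3 n).card = n - 2 := by
    rw [Nat.card_Icc]
    omega
  have hcast : ((n - 2 : ℕ) : ℝ) = (n : ℝ) - 2 := by
    have : (2:ℕ) ≤ n := by omega
    push_cast [this]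
    ring
  have hT : ∑ v ∈ Icc 3 n, wOpt n v = s := by
    rw [Finset.sum_congr rfl hval3, Finset.sum_const, hcard3, nsmul_eq_mul, hcast]
    field_simp
  have hP : ∑ p ∈ (Icc 3 n).powersetCard 2, ∏ v ∈ p, wOpt n v
      = ((n - 2 : ℕ).choose 2 : ℝ) * (s / ((n : ℝ) - 2)) ^ 2 := by
    have hprod : ∀ p ∈ (Icc 3 n).powersetCard 2,
        ∏ v ∈ p, wOpt n v = (s / ((n : ℝ) - 2)) ^ 2 := by
      intro p hp
      rw [Finset.mem_powersetCard] at hp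
      rw [Finset.prod_congr rfl (fun v hv => hval3 v (hp.1 hv)), Finset.prod_const, hp.2]
    rw [Finset.sum_congr rfl hprod, Finset.sum_const, Finset.card_powersetCard,
      hcard3, nsmul_eq_mul]
  have hchoose : ((n - 2 : ℕ).choose 2 : ℝ) = ((n:ℝ) - 2) * ((n:ℝ) - 3) / 2 := by
    rw [Nat.cast_choose_two, hcast]
    ring
  have hfeas : (B2 n).IsFeasible (wOpt n) := by
    constructor
    · intro v hv
      simp only [wOpt]
      split_ifs
      · linarith
      · positivity
      · exact le_rfl
    · show ∑ v ∈ Icc 1 n, wOpt n v = 1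
      rw [Icc_split n hn, Finset.sum_insert (by simp only [Finset.mem_insert, Finset.mem_Icc]; omega), Finset.sum_insert (by simp only [Finset.mem_Icc]; omega), hT, hval12 1 (by norm_num), hval12 2 (by norm_num)]
      ring
  refine ⟨hfeas, ?_⟩
  rw [B2_lagFun n hn, hT, hP, hchoose, hval12 1 (by norm_num), hval12 2 (by norm_num)]
  have hid : t ^ 2 * s / 4 + t * s ^ 2 / 2 = r / 18 := by
    rw [htdef, hsdef]
    linear_combination (-r / 108) * hr2
  rw [← hid]
  field_simp
  ring

lemma B2_bddAbove (n : ℕ) (hn : 3 ≤ n) :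
    BddAbove {x : ℝ | ∃ w, (B2 n).IsFeasible w ∧ (B2 n).lagFun w = x} := by
  refine ⟨Real.sqrt 3 / 18, ?_⟩
  rintro x ⟨w, hw, rfl⟩
  exact B2_lagFun_le n hn w hw

lemma B2_lag_le (n : ℕ) (hn : 3 ≤ n) : (B2 n).lag ≤ Real.sqrt 3 / 18 := by
  apply Real.sSup_le
  · rintro x ⟨w, hw, rfl⟩
    exact B2_lagFun_le n hn w hw
  · positivity

lemma B2_lag_ge (n : ℕ) (hn : 3 ≤ n) :
    Real.sqrt 3 / 18 -
      ((1 - Real.sqrt 3 / 3) * (Real.sqrt 3 / 3) ^ 2 / 2) * (1 / ((n : ℝ) - 2))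
      ≤ (B2 n).lag := by
  obtain ⟨hfeas, hval⟩ := wOpt_spec n hn
  rw [← hval]
  exact le_csSup (B2_bddAbove n hn) ⟨wOpt n, hfeas, rfl⟩

end Aux

/-- For every `n ≥ 3`, `λ(B(2, n-2)) ≤ √3/18`, and `λ(B(2, n-2)) → √3/18` as `n → ∞`. -/
theorem lag_B2 :
    (∀ n : ℕ, 3 ≤ n → (B2 n).lag ≤ Real.sqrt 3 / 18) ∧
    Filter.Tendsto (fun n : ℕ => (B2 n).lag) Filter.atTop (nhds (Real.sqrt 3 / 18)) := by
  constructor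
  · exact fun n hn => B2_lag_le n hn
  · set C : ℝ := (1 - Real.sqrt 3 / 3) * (Real.sqrt 3 / 3) ^ 2 / 2 with hC
    have h1 : Filter.Tendsto (fun n : ℕ => (n:ℝ) - 2) Filter.atTop Filter.atTop := by
      simpa [sub_eq_add_neg] using
        Filter.tendsto_atTop_add_const_right Filter.atTop (-2 : ℝ)
          (tendsto_natCast_atTop_atTop (R := ℝ))
    have h2 : Filter.Tendsto (fun n : ℕ => 1 / ((n:ℝ) - 2)) Filter.atTop (nhds 0) := by
      simpa [one_div, Pi.inv_def] using h1.inv_tendsto_atTop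
    have hlo : Filter.Tendsto (fun n : ℕ => Real.sqrt 3 / 18 - C * (1 / ((n:ℝ) - 2)))
        Filter.atTop (nhds (Real.sqrt 3 / 18)) := by
      have := (tendsto_const_nhds (x := Real.sqrt 3 / 18)
        (f := Filter.atTop (α := ℕ))).sub
        ((tendsto_const_nhds (x := C) (f := Filter.atTop (α := ℕ))).mul h2)
      simpa using this
    refine tendsto_of_tendsto_of_tendsto_of_le_of_le' hlo tendsto_const_nhds ?_ ?_
    · filter_upwards [Filter.eventually_ge_atTop 3] with n hn
      exact B2_lag_ge n hn
    · filter_upwards [Filter.eventually_ge_atTop 3] with n hn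
      exact B2_lag_le n hn
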